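/- arXiv:2003.01269 — 2 statements merged into one kernel-verified Lean document; each statement's English description precedes it below -/
import Mathlib

section
/- Let M, N ≥ 1 and let U := {(λ, ρ) ∈ ℝ^M × ℝ^N : λᵢ > 1 for all i and 0 < ρⱼ < 1 for all j}. Define Φ : U → Matrix(M, N; ℝ) by Φ(λ, ρ)_{ij} = (ln λᵢ)/(ln ρⱼ). Then at every point of U the map Φ is differentiable and its derivative, as a linear map ℝ^M × ℝ^N → Matrix(M, N; ℝ), has rank exactly M + N − 1. -/
open Filter Set

attribute [local instance] Matrix.normedAddCommGroup Matrix.normedSpace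

lemma aux_entry_zero (A L B R u v : ℝ) (hA : A ≠ 0) (hB : B ≠ 0) (hR : R ≠ 0) :
    L * (-(R ^ 2)⁻¹ * (B⁻¹ * v)) + R⁻¹ * (A⁻¹ * u) = 0 ↔ u * (B * R) = v * (A * L) := by
  have hden : A * B * R ^ 2 ≠ 0 :=
    mul_ne_zero (mul_ne_zero hA hB) (pow_ne_zero _ hR)
  have key : L * (-(R ^ 2)⁻¹ * (B⁻¹ * v)) + R⁻¹ * (A⁻¹ * u) =
      (u * (B * R) - v * (A * L)) / (A * B * R ^ 2) := by
    field_simp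
    ring
  rw [key, div_eq_zero_iff, sub_eq_zero]
  simp [hden]

/-- The combined map of ratio invariants `Φ(λ, ρ)ᵢⱼ = ln λᵢ / ln ρⱼ`, defined on the
open set where all `λᵢ > 1` and all `0 < ρⱼ < 1`, is differentiable and its
differential has rank exactly `M + N − 1` at every point. -/
theorem ratio_invariants_rank (M N : ℕ) (hM : 1 ≤ M) (hN : 1 ≤ N)
    (U : Set ((Fin M → ℝ) × (Fin N → ℝ)))
    (hU : U = {p | (∀ i, 1 < p.1 i) ∧ (∀ j, 0 < p.2 j ∧ p.2 j < 1)})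
    (Φ : (Fin M → ℝ) × (Fin N → ℝ) → Matrix (Fin M) (Fin N) ℝ)
    (hΦ : ∀ p i j, Φ p i j = Real.log (p.1 i) / Real.log (p.2 j)) :
    ∀ p ∈ U, ∃ Φ' : ((Fin M → ℝ) × (Fin N → ℝ)) →L[ℝ] Matrix (Fin M) (Fin N) ℝ,
      HasFDerivAt Φ Φ' p ∧
      Module.finrank ℝ (LinearMap.range (Φ' : ((Fin M → ℝ) × (Fin N → ℝ)) →ₗ[ℝ]
        Matrix (Fin M) (Fin N) ℝ)) = M + N - 1 := by
  intro p hp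
  subst hU
  obtain ⟨hA, hB⟩ := hp
  have hA0 : ∀ i, p.1 i ≠ 0 := fun i => by have := hA i; linarith
  have hL : ∀ i, 0 < Real.log (p.1 i) := fun i => Real.log_pos (hA i)
  have hR : ∀ j, Real.log (p.2 j) < 0 := fun j => Real.log_neg (hB j).1 (hB j).2
  have hL0 : ∀ i, Real.log (p.1 i) ≠ 0 := fun i => ne_of_gt (hL i)
  have hR0 : ∀ j, Real.log (p.2 j) ≠ 0 := fun j => ne_of_lt (hR j)
  have hB0 : ∀ j, p.2 j ≠ 0 := fun j => ne_of_gt (hB j).1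
  set P1 : ∀ _ : Fin M, ((Fin M → ℝ) × (Fin N → ℝ)) →L[ℝ] ℝ :=
    fun i => (ContinuousLinearMap.proj i).comp (ContinuousLinearMap.fst ℝ _ _) with hP1
  set P2 : ∀ _ : Fin N, ((Fin M → ℝ) × (Fin N → ℝ)) →L[ℝ] ℝ :=
    fun j => (ContinuousLinearMap.proj j).comp (ContinuousLinearMap.snd ℝ _ _) with hP2
  set D : ∀ (_ : Fin M) (_ : Fin N), ((Fin M → ℝ) × (Fin N → ℝ)) →L[ℝ] ℝ :=
    fun i j => Real.log (p.1 i) • (-(Real.log (p.2 j) ^ 2)⁻¹ • ((p.2 j)⁻¹ • P2 j)) +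
      (Real.log (p.2 j))⁻¹ • ((p.1 i)⁻¹ • P1 i) with hD
  set Φ' : ((Fin M → ℝ) × (Fin N → ℝ)) →L[ℝ] Matrix (Fin M) (Fin N) ℝ :=
    ContinuousLinearMap.pi (fun i => ContinuousLinearMap.pi (fun j => D i j)) with hΦ'
  refine ⟨Φ', ?_, ?_⟩
  · apply hasFDerivAt_pi''
    intro i
    rw [hΦ', ContinuousLinearMap.proj_pi]
    apply hasFDerivAt_pi''
    intro j
    rw [ContinuousLinearMap.proj_pi]
    have h1 : HasFDerivAt (fun q : (Fin M → ℝ) × (Fin N → ℝ) => Real.log (q.1 i))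
        ((p.1 i)⁻¹ • P1 i) p :=
      by have := (Real.hasDerivAt_log (hA0 i)).comp_hasFDerivAt p (P1 i).hasFDerivAt; exact this
    have h2 : HasFDerivAt (fun q : (Fin M → ℝ) × (Fin N → ℝ) => Real.log (q.2 j))
        ((p.2 j)⁻¹ • P2 j) p :=
      by have := (Real.hasDerivAt_log (hB0 j)).comp_hasFDerivAt p (P2 j).hasFDerivAt; exact this
    have hg : HasFDerivAt (fun q : (Fin M → ℝ) × (Fin N → ℝ) => (Real.log (q.2 j))⁻¹)
        (-(Real.log (p.2 j) ^ 2)⁻¹ • ((p.2 j)⁻¹ • P2 j)) p :=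
      (hasDerivAt_inv (hR0 j)).comp_hasFDerivAt p h2
    have heq : (fun q : (Fin M → ℝ) × (Fin N → ℝ) => Φ q i j) =
        (fun q => Real.log (q.1 i) * (Real.log (q.2 j))⁻¹) := by
      funext q; rw [hΦ q i j, div_eq_mul_inv]
    rw [heq, hD]
    exact h1.mul hg
  · -- rank computation
    have happ : ∀ (v : (Fin M → ℝ) × (Fin N → ℝ)) i j,
        Φ' v i j = Real.log (p.1 i) * (-(Real.log (p.2 j) ^ 2)⁻¹ * ((p.2 j)⁻¹ * v.2 j)) +
          (Real.log (p.2 j))⁻¹ * ((p.1 i)⁻¹ * v.1 i) := by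
      intro v i j
      rfl
    have hzero : ∀ (v : (Fin M → ℝ) × (Fin N → ℝ)) i j,
        Φ' v i j = 0 ↔ v.1 i * (p.2 j * Real.log (p.2 j)) =
          v.2 j * (p.1 i * Real.log (p.1 i)) := by
      intro v i j
      rw [happ]
      exact aux_entry_zero _ _ _ _ _ _ (hA0 i) (hB0 j) (hR0 j)
    set w : (Fin M → ℝ) × (Fin N → ℝ) :=
      (fun i => p.1 i * Real.log (p.1 i), fun j => p.2 j * Real.log (p.2 j)) with hw
    set f : ((Fin M → ℝ) × (Fin N → ℝ)) →ₗ[ℝ] Matrix (Fin M) (Fin N) ℝ :=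
      (Φ' : ((Fin M → ℝ) × (Fin N → ℝ)) →ₗ[ℝ] Matrix (Fin M) (Fin N) ℝ) with hf
    have hfapp : ∀ v, f v = Φ' v := fun v => rfl
    set i₀ : Fin M := ⟨0, hM⟩ with hi₀
    set j₀ : Fin N := ⟨0, hN⟩ with hj₀
    have hker : LinearMap.ker f = Submodule.span ℝ {w} := by
      apply le_antisymm
      · intro v hv
        rw [LinearMap.mem_ker] at hv
        have hv' : ∀ i j, v.1 i * (p.2 j * Real.log (p.2 j)) =
            v.2 j * (p.1 i * Real.log (p.1 i)) := by
          intro i j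
          rw [← hzero v i j, ← hfapp, hv]
          rfl
        set c : ℝ := v.1 i₀ / (p.1 i₀ * Real.log (p.1 i₀)) with hc
        have hAL0 : p.1 i₀ * Real.log (p.1 i₀) ≠ 0 := mul_ne_zero (hA0 _) (hL0 _)
        have hv2 : ∀ j, v.2 j = c * (p.2 j * Real.log (p.2 j)) := by
          intro j
          rw [hc, div_mul_eq_mul_div, eq_div_iff hAL0, ← hv' i₀ j]
        have hBR0 : p.2 j₀ * Real.log (p.2 j₀) ≠ 0 := mul_ne_zero (hB0 _) (hR0 _)
        have hv1 : ∀ i, v.1 i = c * (p.1 i * Real.log (p.1 i)) := by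
          intro i
          have h := hv' i j₀
          rw [hv2 j₀] at h
          apply mul_right_cancel₀ hBR0
          rw [h]; ring
        have hveq : v = c • w := by
          refine Prod.ext ?_ ?_
          · funext i; rw [hv1 i]; rfl
          · funext j; rw [hv2 j]; rfl
        rw [Submodule.mem_span_singleton]
        exact ⟨c, hveq.symm⟩
      · rw [Submodule.span_le, Set.singleton_subset_iff, SetLike.mem_coe, LinearMap.mem_ker]
        funext i j
        show f w i j = (0 : Matrix (Fin M) (Fin N) ℝ) i j
        rw [hfapp]
        have : Φ' w i j = 0 := by
          rw [hzero]
          show p.1 i * Real.log (p.1 i) * (p.2 j * Real.log (p.2 j)) = _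
          ring
        rw [this]
        rfl
    have hw0 : w ≠ 0 := by
      intro h
      have h1 : w.1 i₀ = 0 := by rw [h]; rfl
      exact mul_ne_zero (hA0 i₀) (hL0 i₀) h1
    have hkrank : Module.finrank ℝ (LinearMap.ker f) = 1 := by
      rw [hker]; exact finrank_span_singleton hw0
    have hrn := LinearMap.finrank_range_add_finrank_ker f
    rw [hkrank] at hrn
    have hdom : Module.finrank ℝ ((Fin M → ℝ) × (Fin N → ℝ)) = M + N := by
      simp [Module.finrank_prod]
    rw [hdom] at hrn
    omega
end

section
/- Let (aₙ) and (bₙ) be strictly decreasing sequences of positive real numbers converging to 0, and let h : ℝ → ℝ be strictly increasing with h(0) = 0. Assume that for every n there exists m with h(aₙ) = bₘ, and that there exists M₀ ∈ ℕ such that for every m ≥ M₀ there exists n with h(aₙ) = bₘ. Then there exist k ∈ ℤ and N ∈ ℕ such that for every n ≥ N one has n + k ≥ 0 and h(aₙ) = b_{n+k}. -/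
open Filter Set

/-- Combinatorial heart of Theorem 3.2: a strictly increasing map fixing `0` that maps
one strictly decreasing null sequence into another (and hits every term of the second
sequence with large enough index) must eventually shift indices by a constant `k ∈ ℤ`. -/
theorem monotone_map_shifts_sequences (a b : ℕ → ℝ) (h : ℝ → ℝ)
    (ha_anti : StrictAnti a) (hb_anti : StrictAnti b)
    (ha_pos : ∀ n, 0 < a n) (hb_pos : ∀ n, 0 < b n)
    (ha_lim : Tendsto a atTop (nhds 0)) (hb_lim : Tendsto b atTop (nhds 0))
    (hh_mono : StrictMono h) (hh0 : h 0 = 0)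
    (h_fwd : ∀ n, ∃ m, h (a n) = b m)
    (h_bwd : ∃ M₀ : ℕ, ∀ m ≥ M₀, ∃ n, h (a n) = b m) :
    ∃ (k : ℤ) (N : ℕ), ∀ n ≥ N, 0 ≤ (n : ℤ) + k ∧ h (a n) = b ((n : ℤ) + k).toNat := by
  obtain ⟨M₀, hM₀⟩ := h_bwd
  choose f hf using h_fwd
  have hb_inj : Function.Injective b := hb_anti.injective
  have hf_mono : StrictMono f := by
    intro n m hnm
    have hlt : b (f m) < b (f n) := by
      rw [← hf, ← hf]; exact hh_mono (ha_anti hnm)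
    exact hb_anti.lt_iff_gt.mp hlt
  have hsurj : ∀ m ≥ M₀, ∃ n, f n = m := by
    intro m hm
    obtain ⟨n, hn⟩ := hM₀ m hm
    exact ⟨n, hb_inj (by rw [← hf]; exact hn)⟩
  have hstep : ∀ n ≥ M₀, f (n + 1) = f n + 1 := by
    intro n hn
    have h1 : f n + 1 ≥ M₀ := le_trans hn (le_trans hf_mono.le_apply (Nat.le_succ _))
    obtain ⟨p, hp⟩ := hsurj (f n + 1) h1
    have hlt : n < p := by
      by_contra hle
      push_neg at hle
      have := hf_mono.monotone hle
      omega
    have h3 : f (n + 1) ≤ f p := hf_mono.monotone hlt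
    have h2 : f n < f (n + 1) := hf_mono (Nat.lt_succ_self n)
    omega
  have hconst : ∀ n ≥ M₀, (f n : ℤ) - n = (f M₀ : ℤ) - M₀ := by
    intro n hn
    induction n, hn using Nat.le_induction with
    | base => rfl
    | succ n hn ih =>
      have := hstep n hn
      push_cast [this]
      omega
  refine ⟨(f M₀ : ℤ) - M₀, M₀, fun n hn => ?_⟩
  have hc := hconst n hn
  have h0 : (n : ℤ) + ((f M₀ : ℤ) - M₀) = (f n : ℤ) := by omega
  constructor
  · rw [h0]; exact Int.ofNat_nonneg _
  · rw [h0]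
    simpa using hf n
end
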